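/- Let d ∈ (0,1/2), let ν be a Borel measure on (0,∞), let R > 0 and a > 0, and set A = (a/d)·R^{1−d}. Define F(u) = ∫_0^R ν([(u/d)·s^{1−d}, ∞)) ds for u > 0. Then, as an inequality in [0,∞], ∫_a^∞ F(u) du ≤ R^d · ∫_{[A,∞)} x ν(dx) + (1−d)·(d/a)^{d/(1−d)} · ∫_{(0,A)} x^{1/(1−d)} ν(dx). -/

import Mathlib

open MeasureTheory Set

namespace Stmt11Aux

lemma ofReal_max_zero (y : ℝ) : ENNReal.ofReal (max 0 y) = ENNReal.ofReal y := by
  rcases le_total 0 y with h | h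
  · rw [max_eq_right h]
  · simp [max_eq_left h, ENNReal.ofReal_eq_zero.mpr h]

lemma integrableOn_aux (c b : ℝ) {r : ℝ} (hr : -1 < r) {T : ℝ} (hT : 0 ≤ T) :
    IntegrableOn (fun s : ℝ => c * s ^ r - b) (Ioc 0 T) := by
  rw [← intervalIntegrable_iff_integrableOn_Ioc_of_le hT]
  exact ((intervalIntegral.intervalIntegrable_rpow' hr).const_mul c).sub
    intervalIntegrable_const

lemma real_integral_aux (c b : ℝ) {d : ℝ} (hd0 : 0 < d) {T : ℝ} (hT : 0 ≤ T)
    (hd1 : -1 < d - 1) :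
    ∫ s in Ioc (0:ℝ) T, (c * s ^ (d - 1) - b) = c * (T ^ d / d) - b * T := by
  rw [← intervalIntegral.integral_of_le hT,
    intervalIntegral.integral_sub
      ((intervalIntegral.intervalIntegrable_rpow' hd1).const_mul c)
      intervalIntegrable_const,
    intervalIntegral.integral_const_mul, integral_rpow (Or.inl hd1),
    intervalIntegral.integral_const]
  rw [sub_add_cancel, Real.zero_rpow hd0.ne']
  simp
  ring

lemma lint_ofReal (c b : ℝ) {d : ℝ} (hd0 : 0 < d) {T : ℝ} (hT : 0 ≤ T) (hd1 : -1 < d - 1)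
    (hpos : ∀ s ∈ Ioc (0:ℝ) T, 0 ≤ c * s ^ (d - 1) - b) :
    ∫⁻ s in Ioc (0:ℝ) T, ENNReal.ofReal (c * s ^ (d - 1) - b)
      = ENNReal.ofReal (c * (T ^ d / d) - b * T) := by
  rw [← ofReal_integral_eq_lintegral_ofReal (integrableOn_aux c b hd1 hT)
      ((ae_restrict_iff' measurableSet_Ioc).mpr (ae_of_all _ hpos)),
    real_integral_aux c b hd0 hT hd1]

end Stmt11Aux

open Stmt11Aux

/-- Inequality (3.6) of the paper, in `[0,∞]`: with
`F(u) = ∫_0^R ν([(u/d)s^{1−d},∞)) ds` and `A = (a/d)R^{1−d}`,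
`∫_a^∞ F(u) du ≤ R^d·∫_{[A,∞)} x ν(dx) + (1−d)(d/a)^{d/(1−d)}·∫_{(0,A)} x^{1/(1−d)} ν(dx)`. -/
theorem stmt_11 (d : ℝ) (hd : d ∈ Set.Ioo (0 : ℝ) (1 / 2)) (ν : Measure ℝ)
    (hν0 : ν (Set.Iic 0) = 0) (R a : ℝ) (hR : 0 < R) (ha : 0 < a)
    (A : ℝ) (hA : A = a / d * R ^ (1 - d)) :
    ∫⁻ u in Set.Ioi a, ∫⁻ s in Set.Ioc 0 R, ν (Set.Ici (u / d * s ^ (1 - d)))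
      ≤ ENNReal.ofReal (R ^ d) * (∫⁻ x in Set.Ici A, ENNReal.ofReal x ∂ν)
        + ENNReal.ofReal ((1 - d) * (d / a) ^ (d / (1 - d))) *
            ∫⁻ x in Set.Ioo 0 A, ENNReal.ofReal (x ^ (1 / (1 - d))) ∂ν := by
  obtain ⟨hd0, hdh⟩ := hd
  have hd1 : d < 1 := by linarith
  have h1d : 0 < 1 - d := by linarith
  have hA0 : 0 < A := by rw [hA]; positivity
  set ν' : Measure ℝ := ν.restrict (Set.Ioi 0) with hν'def
  -- rewrite LHS in terms of ν'
  have hLHS : ∫⁻ u in Set.Ioi a, ∫⁻ s in Set.Ioc 0 R, ν (Set.Ici (u / d * s ^ (1 - d)))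
      = ∫⁻ u in Set.Ioi a, ∫⁻ s in Set.Ioc 0 R, ν' (Set.Ici (u / d * s ^ (1 - d))) := by
    refine setLIntegral_congr_fun measurableSet_Ioi (fun u hu => ?_)
    refine setLIntegral_congr_fun measurableSet_Ioc (fun s hs => ?_)
    have hu0 : 0 < u := ha.trans hu
    have hsp : (0:ℝ) < s ^ (1 - d) := Real.rpow_pos_of_pos hs.1 _
    have hc : 0 < u / d * s ^ (1 - d) := by positivity
    have heq : Set.Ici (u / d * s ^ (1 - d)) ∩ Set.Ioi 0 = Set.Ici (u / d * s ^ (1 - d)) :=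
      Set.inter_eq_left.mpr (fun y hy => lt_of_lt_of_le hc hy)
    rw [hν'def, Measure.restrict_apply measurableSet_Ici, heq]
  have hR1 : ∫⁻ x in Set.Ici A, ENNReal.ofReal x ∂ν
      = ∫⁻ x in Set.Ici A, ENNReal.ofReal x ∂ν' := by
    have heq : Set.Ici A ∩ Set.Ioi 0 = Set.Ici A :=
      Set.inter_eq_left.mpr (fun y hy => lt_of_lt_of_le hA0 hy)
    rw [hν'def, Measure.restrict_restrict measurableSet_Ici, heq]
  have hR2 : ∫⁻ x in Set.Ioo 0 A, ENNReal.ofReal (x ^ (1 / (1 - d))) ∂ν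
      = ∫⁻ x in Set.Ioo 0 A, ENNReal.ofReal (x ^ (1 / (1 - d))) ∂ν' := by
    have heq : Set.Ioo 0 A ∩ Set.Ioi 0 = Set.Ioo 0 A :=
      Set.inter_eq_left.mpr (fun y hy => hy.1)
    rw [hν'def, Measure.restrict_restrict measurableSet_Ioo, heq]
  rw [hLHS, hR1, hR2]
  by_cases htop : ENNReal.ofReal (R ^ d) * (∫⁻ x in Set.Ici A, ENNReal.ofReal x ∂ν')
        + ENNReal.ofReal ((1 - d) * (d / a) ^ (d / (1 - d))) *
            (∫⁻ x in Set.Ioo 0 A, ENNReal.ofReal (x ^ (1 / (1 - d))) ∂ν') = ⊤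
  · exact htop ▸ le_top
  -- finiteness of the two integrals
  obtain ⟨ht1, ht2⟩ := ENNReal.add_ne_top.mp htop
  have hc1 : (ENNReal.ofReal (R ^ d)) ≠ 0 := by
    simp [ENNReal.ofReal_eq_zero, not_le, Real.rpow_pos_of_pos hR d]
  have hc2 : (ENNReal.ofReal ((1 - d) * (d / a) ^ (d / (1 - d)))) ≠ 0 := by
    have : 0 < (1 - d) * (d / a) ^ (d / (1 - d)) := by positivity
    simp [ENNReal.ofReal_eq_zero, not_le, this]
  have hfin1 : (∫⁻ x in Set.Ici A, ENNReal.ofReal x ∂ν') ≠ ⊤ := by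
    intro h; rw [h, ENNReal.mul_top hc1] at ht1; exact ht1 rfl
  have hfin2 : (∫⁻ x in Set.Ioo 0 A, ENNReal.ofReal (x ^ (1 / (1 - d))) ∂ν') ≠ ⊤ := by
    intro h; rw [h, ENNReal.mul_top hc2] at ht2; exact ht2 rfl
  -- sigma-finiteness of ν'
  have hmeasA : ν' (Set.Ici A) < ⊤ := by
    by_contra h
    rw [not_lt, top_le_iff] at h
    have hle : ENNReal.ofReal A * ν' (Set.Ici A) ≤ ∫⁻ x in Set.Ici A, ENNReal.ofReal x ∂ν' := by
      rw [← setLIntegral_const]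
      exact lintegral_mono_ae ((ae_restrict_iff' measurableSet_Ici).mpr
        (ae_of_all _ fun x hx => ENNReal.ofReal_le_ofReal hx))
    rw [h, ENNReal.mul_top (by simp [ENNReal.ofReal_eq_zero, not_le, hA0]), top_le_iff] at hle
    exact hfin1 hle
  have hmeasIoo : ∀ n : ℕ, ν' (Set.Ioo (1 / (n + 1) : ℝ) A) < ⊤ := by
    intro n
    by_contra h
    rw [not_lt, top_le_iff] at h
    have hb : (0:ℝ) < 1 / (n + 1) := by positivity
    have hle : ENNReal.ofReal ((1 / (n + 1) : ℝ) ^ (1 / (1 - d)))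
          * ν' (Set.Ioo (1 / (n + 1) : ℝ) A)
        ≤ ∫⁻ x in Set.Ioo 0 A, ENNReal.ofReal (x ^ (1 / (1 - d))) ∂ν' := by
      rw [← setLIntegral_const]
      refine le_trans (lintegral_mono_ae ((ae_restrict_iff' measurableSet_Ioo).mpr
        (ae_of_all _ fun x hx => ENNReal.ofReal_le_ofReal
          (Real.rpow_le_rpow hb.le hx.1.le (by positivity))))) ?_
      exact lintegral_mono_set (fun x hx => ⟨hb.trans hx.1, hx.2⟩)
    rw [h, ENNReal.mul_top (by simp [ENNReal.ofReal_eq_zero, not_le]; positivity),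
      top_le_iff] at hle
    exact hfin2 hle
  have hsig : SigmaFinite ν' := by
    refine ⟨⟨⟨fun n => Set.Iic 0 ∪ Set.Ioo (1 / (n + 1) : ℝ) A ∪ Set.Ici A,
      fun n => trivial, fun n => ?_, ?_⟩⟩⟩
    · have h0 : ν' (Set.Iic (0:ℝ)) = 0 := by
        rw [hν'def, Measure.restrict_apply measurableSet_Iic]
        have : Set.Iic (0:ℝ) ∩ Set.Ioi 0 = ∅ := by
          ext x; simp only [Set.mem_inter_iff, Set.mem_Iic, Set.mem_Ioi, Set.mem_empty_iff_false,
            iff_false, not_and, not_lt]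
          exact fun h => h
        rw [this, measure_empty]
      refine lt_of_le_of_lt ((measure_union_le _ _).trans
        (add_le_add_left (measure_union_le _ _) _)) ?_
      rw [h0, zero_add]
      exact ENNReal.add_lt_top.mpr ⟨hmeasIoo n, hmeasA⟩
    · ext x
      simp only [Set.mem_iUnion, Set.mem_union, Set.mem_Iic, Set.mem_Ioo, Set.mem_Ici,
        Set.mem_univ, iff_true]
      rcases le_or_gt x 0 with h | h
      · exact ⟨0, Or.inl (Or.inl h)⟩
      rcases lt_or_ge x A with h2 | h2
      · obtain ⟨n, hn⟩ := exists_nat_one_div_lt h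
        exact ⟨n, Or.inl (Or.inr ⟨hn, h2⟩)⟩
      · exact ⟨0, Or.inr h2⟩
  haveI := hsig
  -- step 1: swap u and s
  have hmφ : Measurable fun p : ℝ × ℝ => ν' (Set.Ici (p.1 / d * p.2 ^ (1 - d))) := by
    have h1 : Measurable fun t : ℝ => ν' (Set.Ici t) :=
      Antitone.measurable (fun s t hst => measure_mono (Set.Ici_subset_Ici.mpr hst))
    exact h1.comp ((measurable_fst.div_const d).mul (measurable_snd.pow measurable_const))
  have step1 : ∫⁻ u in Set.Ioi a, ∫⁻ s in Set.Ioc 0 R, ν' (Set.Ici (u / d * s ^ (1 - d)))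
      = ∫⁻ s in Set.Ioc 0 R, ∫⁻ u in Set.Ioi a, ν' (Set.Ici (u / d * s ^ (1 - d))) :=
    lintegral_lintegral_swap hmφ.aemeasurable
  -- step 2: layercake for fixed s
  have step2 : ∀ s ∈ Set.Ioc (0:ℝ) R,
      ∫⁻ u in Set.Ioi a, ν' (Set.Ici (u / d * s ^ (1 - d)))
        = ∫⁻ x, ENNReal.ofReal (d * x * s ^ (d - 1) - a) ∂ν' := by
    intro s hs
    have hs0 : 0 < s := hs.1
    have hsp : (0:ℝ) < s ^ (1 - d) := Real.rpow_pos_of_pos hs0 _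
    have hsd : s ^ (d - 1) = (s ^ (1 - d))⁻¹ := by
      rw [← Real.rpow_neg hs0.le]
      norm_num
    have hiff : ∀ t x : ℝ, (t ≤ d * x * s ^ (d - 1) - a) ↔ ((t + a) / d * s ^ (1 - d) ≤ x) := by
      intro t x
      rw [hsd, div_mul_eq_mul_div, div_le_iff₀ hd0]
      have h2 : d * x * (s ^ (1 - d))⁻¹ = d * x / s ^ (1 - d) := by ring
      constructor
      · intro h
        have h3 : t + a ≤ d * x / s ^ (1 - d) := by linarith [h2]
        have h4 := (le_div_iff₀ hsp).mp h3
        linarith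
      · intro h
        have h4 : (t + a) * s ^ (1 - d) ≤ d * x := by linarith
        have h3 := (le_div_iff₀ hsp).mpr h4
        linarith [h2]
    have hmble : Measurable fun x : ℝ => max 0 (d * x * s ^ (d - 1) - a) :=
      measurable_const.max (((measurable_id.const_mul d).mul_const _).sub measurable_const)
    have lc := lintegral_eq_lintegral_meas_le ν'
      (f := fun x => max 0 (d * x * s ^ (d - 1) - a))
      (ae_of_all _ fun x => le_max_left _ _) hmble.aemeasurable
    have hset : ∀ t ∈ Set.Ioi (0:ℝ),
        ν' {x : ℝ | t ≤ max 0 (d * x * s ^ (d - 1) - a)}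
          = ν' (Set.Ici ((t + a) / d * s ^ (1 - d))) := by
      intro t ht
      congr 1
      ext x
      simp only [Set.mem_setOf_eq, Set.mem_Ici, le_max_iff]
      constructor
      · rintro (h | h)
        · exact absurd h (not_le.mpr ht)
        · exact (hiff t x).mp h
      · intro h
        exact Or.inr ((hiff t x).mpr h)
    have htrans : ∫⁻ t in Set.Ioi (0:ℝ), ν' (Set.Ici ((t + a) / d * s ^ (1 - d)))
        = ∫⁻ u in Set.Ioi a, ν' (Set.Ici (u / d * s ^ (1 - d))) := by
      have := (measurePreserving_add_right (volume : Measure ℝ) a).setLIntegral_comp_preimage_emb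
        (measurableEmbedding_addRight a)
        (fun u => ν' (Set.Ici (u / d * s ^ (1 - d)))) (Set.Ioi a)
      have hpre : (fun x : ℝ => x + a) ⁻¹' Set.Ioi a = Set.Ioi 0 := by
        ext x; simp
      rw [hpre] at this
      exact this
    calc ∫⁻ u in Set.Ioi a, ν' (Set.Ici (u / d * s ^ (1 - d)))
        = ∫⁻ t in Set.Ioi (0:ℝ), ν' (Set.Ici ((t + a) / d * s ^ (1 - d))) := htrans.symm
      _ = ∫⁻ t in Set.Ioi (0:ℝ), ν' {x : ℝ | t ≤ max 0 (d * x * s ^ (d - 1) - a)} :=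
          (setLIntegral_congr_fun measurableSet_Ioi hset).symm
      _ = ∫⁻ x, ENNReal.ofReal (max 0 (d * x * s ^ (d - 1) - a)) ∂ν' := lc.symm
      _ = ∫⁻ x, ENNReal.ofReal (d * x * s ^ (d - 1) - a) ∂ν' := by
          simp_rw [ofReal_max_zero]
  -- step 3: swap s and x
  have hm3 : Measurable fun p : ℝ × ℝ => ENNReal.ofReal (d * p.2 * p.1 ^ (d - 1) - a) :=
    ENNReal.measurable_ofReal.comp (((measurable_snd.const_mul d).mul
      (measurable_fst.pow measurable_const)).sub measurable_const)
  have step3 : ∫⁻ s in Set.Ioc (0:ℝ) R, ∫⁻ x, ENNReal.ofReal (d * x * s ^ (d - 1) - a) ∂ν'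
      = ∫⁻ x, (∫⁻ s in Set.Ioc (0:ℝ) R, ENNReal.ofReal (d * x * s ^ (d - 1) - a)) ∂ν' :=
    lintegral_lintegral_swap hm3.aemeasurable
  -- pointwise bound
  have hbound : ∀ x : ℝ, x ∈ Set.Ioi (0:ℝ) →
      ∫⁻ s in Set.Ioc (0:ℝ) R, ENNReal.ofReal (d * x * s ^ (d - 1) - a)
        ≤ (Set.Ici A).indicator (fun x => ENNReal.ofReal (R ^ d) * ENNReal.ofReal x) x
          + (Set.Ioo 0 A).indicator (fun x => ENNReal.ofReal ((1 - d) * (d / a) ^ (d / (1 - d)))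
              * ENNReal.ofReal (x ^ (1 / (1 - d)))) x := by
    intro x hx
    have hx0 : (0:ℝ) < x := hx
    rcases le_or_gt A x with hxA | hxA
    · rw [Set.indicator_of_mem (Set.mem_Ici.mpr hxA),
        Set.indicator_of_notMem (fun h => absurd h.2 (not_lt.mpr hxA)), add_zero]
      calc ∫⁻ s in Set.Ioc (0:ℝ) R, ENNReal.ofReal (d * x * s ^ (d - 1) - a)
          ≤ ∫⁻ s in Set.Ioc (0:ℝ) R, ENNReal.ofReal (d * x * s ^ (d - 1) - 0) :=
            lintegral_mono fun s => ENNReal.ofReal_le_ofReal (by linarith)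
        _ = ENNReal.ofReal (d * x * (R ^ d / d) - 0 * R) :=
            lint_ofReal (d * x) 0 hd0 hR.le (by linarith)
              (fun s hs => by
                have h5 : (0:ℝ) ≤ s ^ (d - 1) := Real.rpow_nonneg hs.1.le _
                simpa using mul_nonneg (mul_nonneg hd0.le hx0.le) h5)
        _ = ENNReal.ofReal (R ^ d) * ENNReal.ofReal x := by
            rw [← ENNReal.ofReal_mul (p := R ^ d) (by positivity)]
            congr 1
            field_simp
            ring
    · rw [Set.indicator_of_notMem (fun h : x ∈ Set.Ici A => absurd hxA (not_lt.mpr h)),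
        Set.indicator_of_mem (show x ∈ Set.Ioo 0 A from ⟨hx0, hxA⟩), zero_add]
      set s₀ := (d * x / a) ^ (1 / (1 - d)) with hs₀def
      have hq : (0:ℝ) < d * x / a := by positivity
      have hs₀pos : 0 < s₀ := Real.rpow_pos_of_pos hq _
      have hs₀R : s₀ ≤ R := by
        have h1 : d * x / a ≤ R ^ (1 - d) := by
          rw [div_le_iff₀ ha]
          rw [hA] at hxA
          have hmul := mul_lt_mul_of_pos_left hxA hd0
          have hid : d * (a / d * R ^ (1 - d)) = R ^ (1 - d) * a := by field_simp
          linarith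
        calc s₀ ≤ (R ^ (1 - d)) ^ (1 / (1 - d)) :=
              Real.rpow_le_rpow hq.le h1 (by positivity)
          _ = R := by
              rw [← Real.rpow_mul hR.le, mul_one_div, div_self h1d.ne', Real.rpow_one]
      have hs₀inv : d * x * s₀ ^ (d - 1) = a := by
        rw [hs₀def, ← Real.rpow_mul hq.le]
        have he : 1 / (1 - d) * (d - 1) = -1 := by field_simp; ring
        rw [he, Real.rpow_neg_one]
        field_simp
      rw [← Set.Ioc_union_Ioc_eq_Ioc hs₀pos.le hs₀R,
        lintegral_union measurableSet_Ioc (Set.Ioc_disjoint_Ioc_of_le le_rfl)]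
      have hzero : ∫⁻ s in Set.Ioc s₀ R, ENNReal.ofReal (d * x * s ^ (d - 1) - a) = 0 := by
        have hz : ∀ s ∈ Set.Ioc s₀ R,
            ENNReal.ofReal (d * x * s ^ (d - 1) - a) = (0:ENNReal) := by
          intro s hs
          have hle : s ^ (d - 1) ≤ s₀ ^ (d - 1) :=
            Real.rpow_le_rpow_of_nonpos hs₀pos hs.1.le (by linarith)
          refine ENNReal.ofReal_eq_zero.mpr ?_
          have hmm : d * x * s ^ (d - 1) ≤ d * x * s₀ ^ (d - 1) :=
            mul_le_mul_of_nonneg_left hle (by positivity)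
          linarith [hs₀inv]
        rw [setLIntegral_congr_fun measurableSet_Ioc hz, lintegral_zero]
      have hmain : ∫⁻ s in Set.Ioc (0:ℝ) s₀, ENNReal.ofReal (d * x * s ^ (d - 1) - a)
          = ENNReal.ofReal (d * x * (s₀ ^ d / d) - a * s₀) :=
        lint_ofReal (d * x) a hd0 hs₀pos.le (by linarith)
          (fun s hs => by
            have hge : s₀ ^ (d - 1) ≤ s ^ (d - 1) :=
              Real.rpow_le_rpow_of_nonpos hs.1 hs.2 (by linarith)
            have hmm : d * x * s₀ ^ (d - 1) ≤ d * x * s ^ (d - 1) :=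
              mul_le_mul_of_nonneg_left hge (by positivity)
            linarith [hs₀inv])
      rw [hmain, hzero, add_zero]
      apply le_of_eq
      rw [← ENNReal.ofReal_mul (p := (1 - d) * (d / a) ^ (d / (1 - d))) (by positivity)]
      congr 1
      have hda : (0:ℝ) < d / a := by positivity
      have h1 : s₀ ^ d = (d / a) ^ (d / (1 - d)) * x ^ (d / (1 - d)) := by
        rw [hs₀def, ← Real.rpow_mul hq.le]
        have he : 1 / (1 - d) * d = d / (1 - d) := by ring
        rw [he]
        have hdx : d * x / a = d / a * x := by ring
        rw [hdx, Real.mul_rpow hda.le hx0.le]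
      have h2 : s₀ = (d / a) ^ ((1:ℝ) / (1 - d)) * x ^ ((1:ℝ) / (1 - d)) := by
        rw [hs₀def]
        have hdx : d * x / a = d / a * x := by ring
        rw [hdx, Real.mul_rpow hda.le hx0.le]
      have h3 : x * x ^ (d / (1 - d)) = x ^ ((1:ℝ) / (1 - d)) := by
        have he : (1:ℝ) / (1 - d) = 1 + d / (1 - d) := by field_simp; ring
        rw [he, Real.rpow_add hx0, Real.rpow_one]
      have h4 : (d / a) ^ ((1:ℝ) / (1 - d)) = (d / a) ^ (d / (1 - d)) * (d / a) := by
        have he : (1:ℝ) / (1 - d) = d / (1 - d) + 1 := by field_simp; ring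
        rw [he, Real.rpow_add hda, Real.rpow_one]
      rw [h1, h2, h4, ← h3]
      field_simp
  -- final assembly
  have hind1 : Measurable ((Set.Ici A).indicator fun x : ℝ =>
      ENNReal.ofReal (R ^ d) * ENNReal.ofReal x) :=
    ((ENNReal.measurable_ofReal.comp measurable_id).const_mul _).indicator measurableSet_Ici
  calc ∫⁻ u in Set.Ioi a, ∫⁻ s in Set.Ioc 0 R, ν' (Set.Ici (u / d * s ^ (1 - d)))
      = ∫⁻ s in Set.Ioc (0:ℝ) R, ∫⁻ u in Set.Ioi a, ν' (Set.Ici (u / d * s ^ (1 - d))) := step1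
    _ = ∫⁻ s in Set.Ioc (0:ℝ) R, ∫⁻ x, ENNReal.ofReal (d * x * s ^ (d - 1) - a) ∂ν' :=
        setLIntegral_congr_fun measurableSet_Ioc step2
    _ = ∫⁻ x, (∫⁻ s in Set.Ioc (0:ℝ) R, ENNReal.ofReal (d * x * s ^ (d - 1) - a)) ∂ν' := step3
    _ ≤ ∫⁻ x, ((Set.Ici A).indicator (fun x => ENNReal.ofReal (R ^ d) * ENNReal.ofReal x) x
          + (Set.Ioo 0 A).indicator (fun x => ENNReal.ofReal ((1 - d) * (d / a) ^ (d / (1 - d)))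
              * ENNReal.ofReal (x ^ (1 / (1 - d)))) x) ∂ν' := by
        refine lintegral_mono_ae ?_
        rw [hν'def]
        exact (ae_restrict_iff' measurableSet_Ioi).mpr (ae_of_all _ hbound)
    _ = ENNReal.ofReal (R ^ d) * (∫⁻ x in Set.Ici A, ENNReal.ofReal x ∂ν')
        + ENNReal.ofReal ((1 - d) * (d / a) ^ (d / (1 - d))) *
            (∫⁻ x in Set.Ioo 0 A, ENNReal.ofReal (x ^ (1 / (1 - d))) ∂ν') := by
        rw [lintegral_add_left hind1, lintegral_indicator measurableSet_Ici,
          lintegral_indicator measurableSet_Ioo,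
          lintegral_const_mul _ ENNReal.measurable_ofReal,
          lintegral_const_mul _ (show Measurable fun x : ℝ => ENNReal.ofReal (x ^ (1 / (1 - d))) from
            (measurable_id.pow measurable_const).ennreal_ofReal)]
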